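/- Let σ, ρ, β be positive real numbers and let x, y, z : ℝ → ℝ be differentiable functions satisfying the Lorenz equations x'(t) = σ(y(t) − x(t)), y'(t) = x(t)(ρ − z(t)) − y(t), z'(t) = x(t)y(t) − βz(t) for all t ≥ 0. Then the trajectory is bounded forward in time: there exists a real constant C such that x(t)² + y(t)² + z(t)² ≤ C for all t ≥ 0. -/

import Mathlib

/-- For positive parameters `σ, ρ, β`, every differentiable solution
`(x, y, z)` of the Lorenz system `ẋ = σ(y − x)`, `ẏ = x(ρ − z) − y`,
`ż = xy − βz` on `t ≥ 0` is bounded forward in time: there is a constant `C`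
with `x(t)² + y(t)² + z(t)² ≤ C` for all `t ≥ 0`. -/
theorem lorenz_bounded_forward (σ ρ β : ℝ) (hσ : 0 < σ) (hρ : 0 < ρ)
    (hβ : 0 < β) (x y z : ℝ → ℝ)
    (hx : Differentiable ℝ x) (hy : Differentiable ℝ y)
    (hz : Differentiable ℝ z)
    (hx' : ∀ t, 0 ≤ t → deriv x t = σ * (y t - x t))
    (hy' : ∀ t, 0 ≤ t → deriv y t = x t * (ρ - z t) - y t)
    (hz' : ∀ t, 0 ≤ t → deriv z t = x t * y t - β * z t) :
    ∃ C : ℝ, ∀ t, 0 ≤ t → x t ^ 2 + y t ^ 2 + z t ^ 2 ≤ C := by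
  set V : ℝ → ℝ := fun t => ρ * x t ^ 2 + σ * y t ^ 2 + σ * (z t - 2 * ρ) ^ 2 with hVdef
  set c : ℝ := min β (min 2 (2 * σ)) with hcdef
  have hcpos : 0 < c := lt_min hβ (lt_min two_pos (by positivity))
  have hc1 : c ≤ β := min_le_left _ _
  have hc2 : c ≤ 2 := le_trans (min_le_right _ _) (min_le_left _ _)
  have hc3 : c ≤ 2 * σ := le_trans (min_le_right _ _) (min_le_right _ _)
  set K : ℝ := (2 * σ * β * ρ ^ 2 + 2 * c * σ * ρ ^ 2) / c with hKdef
  have hcK : c * K = 2 * σ * β * ρ ^ 2 + 2 * c * σ * ρ ^ 2 := by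
    rw [hKdef, mul_div_assoc']
    exact mul_div_cancel_left₀ _ hcpos.ne'
  -- derivative of V
  have hV : ∀ t : ℝ, HasDerivAt V
      (2 * ρ * x t * deriv x t + 2 * σ * y t * deriv y t
        + 2 * σ * (z t - 2 * ρ) * deriv z t) t := by
    intro t
    have h1 := (((hx t).hasDerivAt.pow 2).const_mul ρ)
    have h2 := (((hy t).hasDerivAt.pow 2).const_mul σ)
    have h3 := ((((hz t).hasDerivAt.sub_const (2 * ρ)).pow 2).const_mul σ)
    have := (h1.add h2).add h3
    convert this using 1
    · rfl
    · rfl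
    · rfl
    · rw [show (2:ℕ) - 1 = 1 from rfl]; push_cast; ring
  set g : ℝ → ℝ := fun t => (V t - K) * Real.exp (c * t) with hgdef
  have hg : ∀ t : ℝ, HasDerivAt g
      ((2 * ρ * x t * deriv x t + 2 * σ * y t * deriv y t
        + 2 * σ * (z t - 2 * ρ) * deriv z t) * Real.exp (c * t)
        + (V t - K) * (c * Real.exp (c * t))) t := by
    intro t
    have he : HasDerivAt (fun t => Real.exp (c * t)) (c * Real.exp (c * t)) t := by
      have := ((hasDerivAt_id t).const_mul c).exp
      simpa [mul_comm] using this
    exact ((hV t).sub_const K).mul he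
  have hganti : AntitoneOn g (Set.Ici (0 : ℝ)) := by
    apply antitoneOn_of_deriv_nonpos (convex_Ici 0)
    · exact fun t _ => ((hg t).differentiableAt.continuousAt).continuousWithinAt
    · exact fun t _ => (hg t).differentiableAt.differentiableWithinAt
    · intro t ht
      rw [interior_Ici] at ht
      have ht0 : (0 : ℝ) ≤ t := le_of_lt ht
      rw [(hg t).deriv, hx' t ht0, hy' t ht0, hz' t ht0]
      have hexp : 0 < Real.exp (c * t) := Real.exp_pos _
      have key : 2 * ρ * x t * (σ * (y t - x t)) + 2 * σ * y t * (x t * (ρ - z t) - y t)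
          + 2 * σ * (z t - 2 * ρ) * (x t * y t - β * z t) + (V t - K) * c ≤ 0 := by
        have hVt : V t = ρ * x t ^ 2 + σ * y t ^ 2 + σ * (z t - 2 * ρ) ^ 2 := rfl
        rw [hVt]
        have e1 : (0:ℝ) ≤ σ * (β - c) * (z t - ρ) ^ 2 :=
          mul_nonneg (mul_nonneg hσ.le (by linarith)) (sq_nonneg _)
        have e2 : (0:ℝ) ≤ σ * (2 - c) * (y t) ^ 2 :=
          mul_nonneg (mul_nonneg hσ.le (by linarith)) (sq_nonneg _)
        have e3 : (0:ℝ) ≤ ρ * (2 * σ - c) * (x t) ^ 2 :=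
          mul_nonneg (mul_nonneg hρ.le (by linarith)) (sq_nonneg _)
        have e4 : (0:ℝ) ≤ c * σ * (z t) ^ 2 :=
          mul_nonneg (mul_nonneg hcpos.le hσ.le) (sq_nonneg _)
        nlinarith [hcK, e1, e2, e3, e4]
      nlinarith [mul_nonpos_of_nonpos_of_nonneg key hexp.le]
  -- bound on V
  set M : ℝ := max K (V 0) with hMdef
  have hVle : ∀ t, 0 ≤ t → V t ≤ M := by
    intro t ht
    have hgt := hganti (Set.self_mem_Ici) ht ht
    simp only [hgdef, mul_zero, Real.exp_zero, mul_one] at hgt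
    by_cases h : V t ≤ K
    · exact le_trans h (le_max_left _ _)
    · push_neg at h
      have hexp1 : (1:ℝ) ≤ Real.exp (c * t) := Real.one_le_exp (by positivity)
      have : V t - K ≤ (V t - K) * Real.exp (c * t) := by
        nlinarith
      have : V t - K ≤ V 0 - K := le_trans this hgt
      have : V t ≤ V 0 := by linarith
      exact le_trans this (le_max_right _ _)
  refine ⟨M / ρ + 3 * M / σ + 8 * ρ ^ 2, fun t ht => ?_⟩
  have hVt : ρ * x t ^ 2 + σ * y t ^ 2 + σ * (z t - 2 * ρ) ^ 2 ≤ M := hVle t ht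
  have hx2 : x t ^ 2 ≤ M / ρ := by
    rw [le_div_iff₀ hρ]
    nlinarith [sq_nonneg (y t), sq_nonneg (z t - 2 * ρ)]
  have hy2 : y t ^ 2 ≤ M / σ := by
    rw [le_div_iff₀ hσ]
    nlinarith [sq_nonneg (x t), sq_nonneg (z t - 2 * ρ)]
  have hz2 : z t ^ 2 ≤ 2 * M / σ + 8 * ρ ^ 2 := by
    have h1 : σ * (z t - 2 * ρ) ^ 2 ≤ M := by
      nlinarith [sq_nonneg (x t), sq_nonneg (y t)]
    have h2 : z t ^ 2 ≤ 2 * (z t - 2 * ρ) ^ 2 + 8 * ρ ^ 2 := by nlinarith [sq_nonneg (z t - 4 * ρ)]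
    have h3 : (z t - 2 * ρ) ^ 2 ≤ M / σ := by rw [le_div_iff₀ hσ]; linarith [h1]
    calc z t ^ 2 ≤ 2 * (z t - 2 * ρ) ^ 2 + 8 * ρ ^ 2 := h2
      _ ≤ 2 * (M / σ) + 8 * ρ ^ 2 := by linarith
      _ = 2 * M / σ + 8 * ρ ^ 2 := by ring
  calc x t ^ 2 + y t ^ 2 + z t ^ 2 ≤ M / ρ + M / σ + (2 * M / σ + 8 * ρ ^ 2) := by linarith
    _ = M / ρ + 3 * M / σ + 8 * ρ ^ 2 := by ring
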